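/- Let ρ and ρ' be two routes from source n_s to node n_x. If L(ρ') > L(ρ) and C(ρ') > C(ρ) + 1, then ρ' cannot be a sub-route of a simplest near-fastest route from n_s to the target n_t; precisely, for every route σ from n_x to n_t such that the concatenation ρ'σ is a near-fastest route from n_s to n_t, the concatenation ρσ is also a near-fastest route from n_s to n_t and satisfies L(ρσ) < L(ρ'σ) and C(ρσ) < C(ρ'σ), so ρ'σ is not a simplest near-fastest route. -/

import Mathlib

/-- A road network: a directed graph on node type `V` together with a set of
roads `R`, a membership relation `onRoad`, a unique road `roadOf x y` for each
edge `(x, y)`, a positive length `len` on edges, and a turn-cost function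
`turn` with values in `[0,1]` that vanishes when staying on the same road. -/
structure RoadNetwork (V R : Type) where
  edge : V → V → Prop
  onRoad : V → R → Prop
  roadOf : V → V → R
  len : V → V → ℝ
  turn : V → R → R → ℝ
  onRoad_nonempty : ∀ n : V, ∃ r : R, onRoad n r
  len_pos : ∀ ⦃x y : V⦄, edge x y → 0 < len x y
  turn_nonneg : ∀ (n : V) (r₁ r₂ : R), onRoad n r₁ → onRoad n r₂ → 0 ≤ turn n r₁ r₂
  turn_le_one : ∀ (n : V) (r₁ r₂ : R), onRoad n r₁ → onRoad n r₂ → turn n r₁ r₂ ≤ 1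
  turn_self : ∀ (n : V) (r : R), turn n r r = 0
  edge_onRoad_left : ∀ ⦃x y : V⦄, edge x y → onRoad x (roadOf x y)
  edge_onRoad_right : ∀ ⦃x y : V⦄, edge x y → onRoad y (roadOf x y)

namespace RoadNetwork

variable {V R : Type}

/-- A route is a nonempty sequence of nodes every consecutive pair of which is an edge. -/
def IsRoute (N : RoadNetwork V R) (ρ : List V) : Prop :=
  ρ ≠ [] ∧ ρ.Chain' N.edge

/-- The length of a route: the sum of the lengths of its edges. -/
def routeLen (N : RoadNetwork V R) (ρ : List V) : ℝ :=
  ((ρ.zip ρ.tail).map fun p => N.len p.1 p.2).sum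

/-- The complexity of a route: the sum of the turn costs at its internal nodes. -/
def routeCpl (N : RoadNetwork V R) (ρ : List V) : ℝ :=
  ((ρ.zip (ρ.tail.zip ρ.tail.tail)).map fun p =>
    N.turn p.2.1 (N.roadOf p.1 p.2.1) (N.roadOf p.2.1 p.2.2)).sum

/-- A route from `a` to `b`. -/
def RouteFromTo (N : RoadNetwork V R) (ρ : List V) (a b : V) : Prop :=
  N.IsRoute ρ ∧ ρ.head? = some a ∧ ρ.getLast? = some b

/-- Edges of the expanded graph: from `(n_x, r_i)` to `(n_y, r_j)` whenever
`r_i, r_j ∈ R(n_x)` and `(n_x, n_y)` is an edge lying on road `r_j`. -/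
def expEdge (N : RoadNetwork V R) (a b : V × R) : Prop :=
  N.onRoad a.1 a.2 ∧ N.onRoad a.1 b.2 ∧ N.edge a.1 b.1 ∧ N.roadOf a.1 b.1 = b.2

/-- An expanded route: a nonempty path in the expanded graph. -/
def IsExpRoute (N : RoadNetwork V R) (σ : List (V × R)) : Prop :=
  σ ≠ [] ∧ σ.Chain' N.expEdge ∧ ∀ a ∈ σ, N.onRoad a.1 a.2

/-- The length of an expanded route: the sum of the lengths of its edges. -/
def expLen (N : RoadNetwork V R) (σ : List (V × R)) : ℝ :=
  ((σ.zip σ.tail).map fun p => N.len p.1.1 p.2.1).sum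

/-- The complexity of an expanded route: the sum of the turn costs
`C(n_x, r_i, r_j)` over its edges `((n_x, r_i), (n_y, r_j))`. -/
def expCpl (N : RoadNetwork V R) (σ : List (V × R)) : ℝ :=
  ((σ.zip σ.tail).map fun p => N.turn p.1.1 p.1.2 p.2.2).sum

/-- An expanded route from `a` to `b`. -/
def ExpRouteFromTo (N : RoadNetwork V R) (σ : List (V × R)) (a b : V × R) : Prop :=
  N.IsExpRoute σ ∧ σ.head? = some a ∧ σ.getLast? = some b

/-- `σ ∈ E(ρ)`: the expanded routes associated with route `ρ`; the `k`-th
expanded node (for `k > 1`) is `(n_k, R(n_{k-1}, n_k))`, while the first is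
`(n_1, r)` for an arbitrary road `r ∈ R(n_1)`. -/
def InExpansion (N : RoadNetwork V R) (ρ : List V) (σ : List (V × R)) : Prop :=
  σ.map Prod.fst = ρ ∧ (∀ a ∈ σ, N.onRoad a.1 a.2) ∧
  ∀ (k : ℕ) (h : k + 1 < σ.length),
    (σ.get ⟨k + 1, h⟩).2 =
      N.roadOf (σ.get ⟨k, Nat.lt_of_succ_lt h⟩).1 (σ.get ⟨k + 1, h⟩).1

/-- The special expanded route `ρ_E* ∈ E(ρ)`: its first expanded node is
`(n_1, R(n_1, n_2))`. -/
def IsSpecialExpansion (N : RoadNetwork V R) (ρ : List V) (σ : List (V × R)) : Prop :=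
  N.InExpansion ρ σ ∧
  ∀ (h : 1 < σ.length),
    (σ.get ⟨0, Nat.lt_of_succ_lt h⟩).2 =
      N.roadOf (σ.get ⟨0, Nat.lt_of_succ_lt h⟩).1 (σ.get ⟨1, h⟩).1

end RoadNetwork

/-- `(c₁, l₁) <_FS (c₂, l₂)`: FS-shorter, i.e. lower complexity, or equal
complexity and smaller length. -/
def FSshorter (c₁ l₁ c₂ l₂ : ℝ) : Prop := c₁ < c₂ ∨ (c₁ = c₂ ∧ l₁ < l₂)

/-- A near-fastest route from `a` to `b` (with respect to the fastest-route
lengths `sfL` towards the target): a route of length at most `(1 + ε) * sfL a`. -/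
def NearFastest {V R : Type} (N : RoadNetwork V R) (ε : ℝ) (sfL : V → ℝ)
    (ρ : List V) (a b : V) : Prop :=
  N.RouteFromTo ρ a b ∧ N.routeLen ρ ≤ (1 + ε) * sfL a

/-- A simplest near-fastest route from `a` to `b`: a near-fastest route of
minimum complexity among all near-fastest routes from `a` to `b`. -/
def SimplestNearFastest {V R : Type} (N : RoadNetwork V R) (ε : ℝ) (sfL : V → ℝ)
    (ρ : List V) (a b : V) : Prop :=
  NearFastest N ε sfL ρ a b ∧
  ∀ ρ' : List V, NearFastest N ε sfL ρ' a b → N.routeCpl ρ ≤ N.routeCpl ρ'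

namespace RoadNetwork

variable {V R : Type} (N : RoadNetwork V R)

lemma routeLen_single (a : V) : N.routeLen [a] = 0 := rfl

lemma routeLen_cons (a b : V) (l : List V) :
    N.routeLen (a :: b :: l) = N.len a b + N.routeLen (b :: l) := by
  simp [routeLen]

lemma routeCpl_single (a : V) : N.routeCpl [a] = 0 := rfl

lemma routeCpl_pair (a b : V) : N.routeCpl [a, b] = 0 := rfl

lemma routeCpl_cons (a b c : V) (l : List V) :
    N.routeCpl (a :: b :: c :: l) =
      N.turn b (N.roadOf a b) (N.roadOf b c) + N.routeCpl (b :: c :: l) := by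
  simp [routeCpl]

lemma routeLen_append' (x : V) : ∀ (ρ : List V), ρ.getLast? = some x →
    ∀ s : List V, N.routeLen (ρ ++ s) = N.routeLen ρ + N.routeLen (x :: s)
  | [], h, s => by simp at h
  | [a], h, s => by
      simp only [List.getLast?_singleton, Option.some.injEq] at h
      subst h
      simp [routeLen_single]
  | a :: b :: l, h, s => by
      have h' : (b :: l).getLast? = some x := by
        simpa using h
      have IH := routeLen_append' x (b :: l) h' s
      rw [List.cons_append, List.cons_append, routeLen_cons, routeLen_cons,
        ← List.cons_append, IH]
      ring

lemma routeCpl_append_bounds (x y : V) : ∀ (ρ s : List V),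
    ρ.getLast? = some x → (ρ ++ y :: s).Chain' N.edge →
    N.routeCpl ρ + N.routeCpl (x :: y :: s) ≤ N.routeCpl (ρ ++ y :: s) ∧
    N.routeCpl (ρ ++ y :: s) ≤ N.routeCpl ρ + N.routeCpl (x :: y :: s) + 1
  | [], s, h, _ => by simp at h
  | [a], s, h, hch => by
      simp only [List.getLast?_singleton, Option.some.injEq] at h
      subst h
      simp only [List.singleton_append, routeCpl_single]
      constructor <;> linarith
  | [a, b], s, h, hch => by
      have hb : b = x := by simpa using h
      subst hb
      have hch' : (a :: b :: y :: s).Chain' N.edge := by simpa using hch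
      unfold List.Chain' at hch'
      rw [List.isChain_cons_cons, List.isChain_cons_cons] at hch'
      have e1 : N.edge a b := hch'.1
      have e2 : N.edge b y := hch'.2.1
      have o1 : N.onRoad b (N.roadOf a b) := N.edge_onRoad_right e1
      have o2 : N.onRoad b (N.roadOf b y) := N.edge_onRoad_left e2
      have t0 : 0 ≤ N.turn b (N.roadOf a b) (N.roadOf b y) := N.turn_nonneg _ _ _ o1 o2
      have t1 : N.turn b (N.roadOf a b) (N.roadOf b y) ≤ 1 := N.turn_le_one _ _ _ o1 o2
      have : ([a, b] : List V) ++ y :: s = a :: b :: y :: s := rfl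
      rw [this, routeCpl_cons, routeCpl_pair]
      constructor <;> linarith
  | a :: b :: c :: l, s, h, hch => by
      have h' : (b :: c :: l).getLast? = some x := by simpa using h
      simp only [List.cons_append] at hch
      unfold List.Chain' at hch
      rw [List.isChain_cons_cons] at hch
      have hch' : ((b :: c :: l) ++ y :: s).Chain' N.edge := by
        simpa [List.cons_append, List.Chain'] using hch.2
      have IH := routeCpl_append_bounds x y (b :: c :: l) s h' hch'
      have e : (a :: b :: c :: l) ++ y :: s = a :: b :: c :: (l ++ y :: s) := by simp
      rw [e, routeCpl_cons, routeCpl_cons]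
      have e2 : (b :: c :: l) ++ y :: s = b :: c :: (l ++ y :: s) := by simp
      rw [e2] at IH
      constructor <;> linarith [IH.1, IH.2]

end RoadNetwork

/-- **Lemma 7 (dominance pruning).** Let `ρ`, `ρ'` be routes from `n_s` to
`n_x` with `L(ρ') > L(ρ)` and `C(ρ') > C(ρ) + 1`. Then `ρ'` cannot be a
sub-route of a simplest near-fastest route from `n_s` to `n_t`: for every route
`σ` from `n_x` to `n_t` such that `ρ'σ` is near-fastest, the route `ρσ` is
also near-fastest with `L(ρσ) < L(ρ'σ)` and `C(ρσ) < C(ρ'σ)`, so `ρ'σ` is not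
a simplest near-fastest route. -/
theorem prune_by_dominance {V R : Type} [Fintype V] [Fintype R]
    (N : RoadNetwork V R) (ns nx nt : V) (ε : ℝ) (hε : 0 ≤ ε) (sfL : V → ℝ)
    (ρ ρ' : List V)
    (hρ : N.RouteFromTo ρ ns nx) (hρ' : N.RouteFromTo ρ' ns nx)
    (hL : N.routeLen ρ' > N.routeLen ρ)
    (hC : N.routeCpl ρ' > N.routeCpl ρ + 1) :
    ∀ σ : List V, N.RouteFromTo σ nx nt →
      NearFastest N ε sfL (ρ' ++ σ.tail) ns nt →
      NearFastest N ε sfL (ρ ++ σ.tail) ns nt ∧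
      N.routeLen (ρ ++ σ.tail) < N.routeLen (ρ' ++ σ.tail) ∧
      N.routeCpl (ρ ++ σ.tail) < N.routeCpl (ρ' ++ σ.tail) ∧
      ¬ SimplestNearFastest N ε sfL (ρ' ++ σ.tail) ns nt := by
  rintro σ ⟨⟨hσne, hσch⟩, hσh, hσl⟩ hNF'
  obtain ⟨⟨hρne, hρch⟩, hρh, hρl⟩ := hρ
  obtain ⟨⟨hρ'ne, hρ'ch⟩, hρ'h, hρ'l⟩ := hρ'
  -- σ = nx :: t
  obtain ⟨a, t, rfl⟩ : ∃ a t, σ = a :: t := by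
    cases σ with
    | nil => simp at hσh
    | cons a t => exact ⟨a, t, rfl⟩
  obtain rfl : nx = a := (show a = nx by simpa using hσh).symm
  simp only [List.tail_cons] at hNF' ⊢
  -- lengths
  have hLρ := N.routeLen_append' nx ρ hρl t
  have hLρ' := N.routeLen_append' nx ρ' hρ'l t
  have hLlt : N.routeLen (ρ ++ t) < N.routeLen (ρ' ++ t) := by
    rw [hLρ, hLρ']; linarith
  -- chain for ρ ++ t
  have hchρt : (ρ ++ t).Chain' N.edge := by
    unfold List.Chain'
    rw [List.isChain_append]
    refine ⟨hρch, (List.isChain_cons.mp hσch).2, ?_⟩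
    intro u hu v hv
    rw [hρl, Option.mem_some_iff] at hu
    subst hu
    cases t with
    | nil => simp at hv
    | cons b t' =>
        rw [List.head?_cons, Option.mem_some_iff] at hv
        subst hv
        exact (List.isChain_cons_cons.mp hσch).1
  -- route from ns to nt
  have hRFT : N.RouteFromTo (ρ ++ t) ns nt := by
    refine ⟨⟨by simp [hρne], hchρt⟩, ?_, ?_⟩
    · cases ρ with
      | nil => exact absurd rfl hρne
      | cons p l => simpa using hρh
    · cases t with
      | nil => simpa using hρl.trans (by simpa using hσl)
      | cons b t' =>
          rw [List.getLast?_append]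
          have hx : (b :: t').getLast? = some nt := by
            rw [← List.getLast?_cons_cons]; exact hσl
          simp [hx]
  -- near fastest
  have hle' : N.routeLen (ρ' ++ t) ≤ (1 + ε) * sfL ns := hNF'.2
  have hNF : NearFastest N ε sfL (ρ ++ t) ns nt :=
    ⟨hRFT, le_of_lt (lt_of_lt_of_le hLlt hle')⟩
  -- complexity
  have hClt : N.routeCpl (ρ ++ t) < N.routeCpl (ρ' ++ t) := by
    cases t with
    | nil =>
        simp only [List.append_nil]
        linarith
    | cons y s =>
        have hchρ't : (ρ' ++ y :: s).Chain' N.edge := hNF'.1.1.2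
        have B := N.routeCpl_append_bounds nx y ρ s hρl hchρt
        have B' := N.routeCpl_append_bounds nx y ρ' s hρ'l hchρ't
        linarith [B.2, B'.1]
  refine ⟨hNF, hLlt, hClt, ?_⟩
  rintro ⟨_, hmin⟩
  have := hmin (ρ ++ t) hNF
  linarith
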